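/- Spark of the consecutive-row partial Fourier matrix: let L ≥ 1 and N ≥ 2L, and let F_κ be the 2L × N matrix with entries (F_κ)_{k,r} = exp(−2πi·k·r/N) for k ∈ {0,…,2L−1}, r ∈ {0,…,N−1}. Then every set of 2L columns of F_κ is linearly independent; equivalently, the only vector in ℂ^N with at most 2L nonzero entries lying in the kernel of F_κ is the zero vector. -/

import Mathlib

open Matrix

/-- Spark of the consecutive-row partial Fourier matrix: every set of `2L` columns of
`F_κ` is linearly independent; equivalently the only `2L`-sparse vector in its kernel
is zero. -/
theorem partial_fourier_spark (L N : ℕ) (hL : 1 ≤ L) (hN : 2 * L ≤ N)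
    (Fκ : Matrix (Fin (2 * L)) (Fin N) ℂ)
    (hF : ∀ (k : Fin (2 * L)) (r : Fin N),
      Fκ k r = Complex.exp (-(2 * Real.pi * Complex.I * (k.val : ℂ) * (r.val : ℂ)) / (N : ℂ))) :
    (∀ s : Finset (Fin N), s.card = 2 * L →
      LinearIndependent ℂ (fun j : s => Fκ.transpose j.val)) ∧
    (∀ x : Fin N → ℂ, (Function.support x).ncard ≤ 2 * L → Fκ.mulVec x = 0 → x = 0) := by
  have hNpos : 0 < N := by omega
  have hNne : (N : ℂ) ≠ 0 := Nat.cast_ne_zero.mpr (by omega)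
  have h2πI : (2 : ℂ) * Real.pi * Complex.I ≠ 0 := by
    simp [Real.pi_ne_zero, Complex.I_ne_zero]
  set z : Fin N → ℂ := fun r =>
    Complex.exp (-(2 * Real.pi * Complex.I * (r.val : ℂ)) / (N : ℂ)) with hz
  have hFz : ∀ (k : Fin (2 * L)) (r : Fin N), Fκ k r = z r ^ (k : ℕ) := by
    intro k r
    rw [hF, hz, ← Complex.exp_nat_mul]
    congr 1
    ring
  have hinj : Function.Injective z := by
    intro r r' h
    rw [hz, Complex.exp_eq_exp_iff_exists_int] at h
    obtain ⟨n, hn⟩ := h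
    have h2 : ((r'.val : ℂ)) = (r.val : ℂ) + n * N := by
      have h := hn
      field_simp at h
      have hm : (2 * (Real.pi : ℂ) * Complex.I) * (N : ℂ) ≠ 0 := mul_ne_zero h2πI hNne
      apply mul_left_cancel₀ hm
      linear_combination (2 * (Real.pi : ℂ) * Complex.I * (N : ℂ)) * h
    have h3 : (r'.val : ℤ) = (r.val : ℤ) + n * N := by exact_mod_cast h2
    have hr : (r.val : ℤ) < N := by exact_mod_cast r.2
    have hr' : (r'.val : ℤ) < N := by exact_mod_cast r'.2
    have hr0 : (0 : ℤ) ≤ (r.val : ℤ) := by positivity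
    have hr'0 : (0 : ℤ) ≤ (r'.val : ℤ) := by positivity
    have hNZ : (0 : ℤ) < N := by exact_mod_cast hNpos
    have hn0 : n = 0 := by
      rcases lt_trichotomy n 0 with hlt | h0 | hgt
      · have h1 : n ≤ -1 := by omega
        nlinarith
      · exact h0
      · have h1 : 1 ≤ n := by omega
        nlinarith
    subst hn0
    simp at h3
    exact Fin.ext (by exact_mod_cast h3.symm)
  have key : ∀ s : Finset (Fin N), s.card = 2 * L →
      LinearIndependent ℂ (fun j : s => Fκ.transpose j.val) := by
    intro s hs
    have e : Fin (2 * L) ≃ {x // x ∈ s} := (s.equivFinOfCardEq hs).symm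
    have hinj' : Function.Injective (fun i : Fin (2 * L) => z (e i).val) := by
      intro a b hab
      exact e.injective (Subtype.ext (hinj hab))
    have hdet : (Matrix.vandermonde (fun i => z (e i).val)).det ≠ 0 :=
      Matrix.det_vandermonde_ne_zero_iff.mpr hinj'
    have hli : LinearIndependent ℂ
        (fun i : Fin (2 * L) => (Matrix.vandermonde (fun i => z (e i).val)) i) :=
      Matrix.linearIndependent_rows_iff_isUnit.mpr
        ((Matrix.isUnit_iff_isUnit_det _).mpr hdet.isUnit)
    have hli2 : LinearIndependent ℂ (fun i : Fin (2 * L) => Fκ.transpose (e i).val) := by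
      convert hli using 2 with i
      funext k
      simp [Matrix.vandermonde, Matrix.transpose_apply, hFz]
    have h := hli2.comp e.symm e.symm.injective
    have heq : ((fun i : Fin (2 * L) => Fκ.transpose (e i).val) ∘ e.symm)
        = fun j : s => Fκ.transpose j.val := by
      funext j
      simp [Function.comp]
    rwa [heq] at h
  refine ⟨key, ?_⟩
  intro x hx hker
  have hsupfin : (Function.support x).Finite := Set.toFinite _
  obtain ⟨s, hsub, -, hcard⟩ := Finset.exists_subsuperset_card_eq (n := 2 * L)
    (hsupfin.toFinset.subset_univ) (by
      rw [← Set.ncard_eq_toFinset_card _ hsupfin]; exact hx) (by simpa using hN)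
  have hxoff : ∀ r : Fin N, r ∉ s → x r = 0 := by
    intro r hr
    by_contra hxr
    exact hr (hsub (hsupfin.mem_toFinset.mpr hxr))
  have h0 : (∑ j : s, x j.val • Fκ.transpose j.val) = 0 := by
    funext k
    have hk := congrFun hker k
    rw [Matrix.mulVec, dotProduct] at hk
    simp only [Pi.zero_apply] at hk
    simp only [Finset.sum_apply, Pi.smul_apply, smul_eq_mul, Matrix.transpose_apply,
      Pi.zero_apply]
    rw [Finset.sum_coe_sort s (fun j => x j * Fκ k j)]
    rw [Finset.sum_subset (s.subset_univ)
      (fun r _ hrs => by rw [hxoff r hrs, zero_mul])]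
    rw [← hk]
    exact Finset.sum_congr rfl (fun r _ => mul_comm _ _)
  have hzero := Fintype.linearIndependent_iff.mp (key s hcard) (fun j => x j.val) h0
  funext r
  by_cases hrs : r ∈ s
  · exact hzero ⟨r, hrs⟩
  · exact hxoff r hrs
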